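/- arXiv:1906.01045 — 3 statements merged into one kernel-verified Lean document; each statement's English description precedes it below -/
import Mathlib

section
/- Let G be a group of unitary operators on a finite-dimensional Hilbert space of dimension at least 2, and let S be a finite, non-empty subset of the unitary group containing a non-scalar element, such that every element of G normalises S (i.e., g s g⁻¹ ∈ S for all g ∈ G, s ∈ S). Then G is not dense in the full unitary group U(d). -/
open NormedSpace Matrix

/-- If a matrix commutes with `exp (t • B)` for all real `t`, it commutes with `B`. -/
lemma aux_comm_of_exp (d : ℕ) (s B : Matrix (Fin d) (Fin d) ℂ)
    (h : ∀ t : ℝ, exp (t • B) * s = s * exp (t • B)) :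
    B * s = s * B := by
  letI : SeminormedRing (Matrix (Fin d) (Fin d) ℂ) := Matrix.linftyOpSemiNormedRing
  letI : NormedRing (Matrix (Fin d) (Fin d) ℂ) := Matrix.linftyOpNormedRing
  letI : NormedAlgebra ℝ (Matrix (Fin d) (Fin d) ℂ) := Matrix.linftyOpNormedAlgebra
  have hd1 : HasDerivAt (fun u : ℝ => exp (u • B) * s)
      (exp ((0:ℝ) • B) * B * s) 0 := (hasDerivAt_exp_smul_const B (0:ℝ)).mul_const _
  have hd2 : HasDerivAt (fun u : ℝ => exp (u • B) * s)
      (s * (exp ((0:ℝ) • B) * B)) 0 := by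
    have := (hasDerivAt_exp_smul_const B (0:ℝ)).const_mul s
    rw [funext h]; exact this
  have := hd1.unique hd2
  simpa [zero_smul, exp_zero] using this

/-- `exp (t • B)` is unitary for skew-hermitian `B`. -/
lemma aux_exp_unitary (d : ℕ) (B : Matrix (Fin d) (Fin d) ℂ) (hB : Bᴴ = -B) (t : ℝ) :
    exp (t • B) ∈ Matrix.unitaryGroup (Fin d) ℂ := by
  have hstar : star (exp (t • B)) = exp (-(t • B)) := by
    have h2 : (t • B)ᴴ = -(t • B) := by
      rw [Matrix.conjTranspose_smul, hB]; simp
    rw [Matrix.star_eq_conjTranspose, ← Matrix.exp_conjTranspose, h2]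
  have hmul : ∀ (X Y : Matrix (Fin d) (Fin d) ℂ), Commute X Y →
      exp (X + Y) = exp X * exp Y := fun X Y h => Matrix.exp_add_of_commute X Y h
  constructor
  · rw [hstar, ← hmul _ _ (Commute.neg_left rfl)]; simp
  · rw [hstar, ← hmul _ _ (Commute.neg_right rfl)]; simp

/-- A continuous map from ℝ into a finite set of matrices is constant. -/
lemma aux_const (d : ℕ) (F : Set (Matrix (Fin d) (Fin d) ℂ)) (hF : F.Finite)
    (g : ℝ → Matrix (Fin d) (Fin d) ℂ) (hg : Continuous g) (hrange : ∀ t, g t ∈ F)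
    (t : ℝ) : g t = g 0 := by
  set T : Set ℝ := {t | g t = g 0} with hT
  have hclosed : IsClosed T := isClosed_eq hg continuous_const
  have hopen : IsOpen T := by
    have h1 : IsClosed (F \ {g 0}) := ((hF.subset Set.diff_subset).isClosed)
    have h2 : T = (g ⁻¹' (F \ {g 0}))ᶜ := by
      ext u
      simp only [Set.mem_compl_iff, Set.mem_preimage, Set.mem_diff, Set.mem_setOf_eq,
        Set.mem_singleton_iff, hT]
      constructor
      · intro h hc; exact hc.2 h
      · intro h; by_contra hne; exact h ⟨hrange u, hne⟩
    rw [h2]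
    exact (h1.preimage hg).isOpen_compl
  have : T = Set.univ := IsClopen.eq_univ ⟨hclosed, hopen⟩ ⟨0, rfl⟩
  have := this ▸ Set.mem_univ t
  exact this

/-- A group of unitaries normalising a finite non-empty set of unitaries containing a
non-scalar element cannot be dense in the unitary group `U(d)` for `d ≥ 2`. -/
theorem stmt_0 (d : ℕ) (hd : 2 ≤ d)
    (G : Subgroup (Matrix.unitaryGroup (Fin d) ℂ))
    (S : Finset (Matrix.unitaryGroup (Fin d) ℂ))
    (hne : S.Nonempty)
    (hns : ∃ s ∈ S, ∀ c : ℂ, (s : Matrix (Fin d) (Fin d) ℂ) ≠ c • (1 : Matrix (Fin d) (Fin d) ℂ))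
    (hnorm : ∀ g ∈ G, ∀ s ∈ S, g * s * g⁻¹ ∈ S) :
    ¬ Dense (G : Set (Matrix.unitaryGroup (Fin d) ℂ)) := by
  intro hD
  obtain ⟨s, hsS, hs⟩ := hns
  -- the finite set of matrices
  set Sm : Set (Matrix (Fin d) (Fin d) ℂ) :=
    ↑(S.image (fun u : Matrix.unitaryGroup (Fin d) ℂ => (u : Matrix (Fin d) (Fin d) ℂ))) with hSm
  have hSmfin : Sm.Finite := (S.image _).finite_toSet
  have hSmclosed : IsClosed Sm := hSmfin.isClosed
  -- the conjugation map, at the matrix level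
  set f : Matrix.unitaryGroup (Fin d) ℂ → Matrix (Fin d) (Fin d) ℂ :=
    fun u => (u : Matrix (Fin d) (Fin d) ℂ) * (s : Matrix (Fin d) (Fin d) ℂ) *
      star (u : Matrix (Fin d) (Fin d) ℂ) with hf
  have hfc : Continuous f := by
    exact (continuous_subtype_val.mul continuous_const).mul continuous_subtype_val.star
  have hmaps : Set.MapsTo f (G : Set (Matrix.unitaryGroup (Fin d) ℂ)) Sm := by
    intro g hg
    have h1 : g * s * g⁻¹ ∈ S := hnorm g hg s hsS
    have h2 : f g = ((g * s * g⁻¹ : Matrix.unitaryGroup (Fin d) ℂ) :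
        Matrix (Fin d) (Fin d) ℂ) := rfl
    rw [h2, hSm]
    simp only [Finset.coe_image, Set.mem_image, Finset.mem_coe]
    exact ⟨_, h1, rfl⟩
  -- every unitary conjugate of s lies in Sm
  have hconj : ∀ u : Matrix.unitaryGroup (Fin d) ℂ, f u ∈ Sm := by
    intro u
    have hu : u ∈ closure (G : Set (Matrix.unitaryGroup (Fin d) ℂ)) := hD u
    have := map_mem_closure hfc hu hmaps
    rwa [hSmclosed.closure_eq] at this
  -- hence s commutes with every skew-hermitian matrix
  have hskew : ∀ B : Matrix (Fin d) (Fin d) ℂ, Bᴴ = -B →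
      B * (s : Matrix (Fin d) (Fin d) ℂ) = (s : Matrix (Fin d) (Fin d) ℂ) * B := by
    intro B hB
    apply aux_comm_of_exp
    intro t
    -- the path of conjugates
    set g : ℝ → Matrix (Fin d) (Fin d) ℂ :=
      fun t => exp (t • B) * (s : Matrix (Fin d) (Fin d) ℂ) * star (exp (t • B)) with hg
    have hgc : Continuous g := by
      letI : SeminormedRing (Matrix (Fin d) (Fin d) ℂ) := Matrix.linftyOpSemiNormedRing
      letI : NormedRing (Matrix (Fin d) (Fin d) ℂ) := Matrix.linftyOpNormedRing
      letI : NormedAlgebra ℝ (Matrix (Fin d) (Fin d) ℂ) := Matrix.linftyOpNormedAlgebra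
      letI : NormedAlgebra ℚ (Matrix (Fin d) (Fin d) ℂ) := Matrix.linftyOpNormedAlgebra
      have h1 : Continuous (fun t : ℝ => exp (t • B)) :=
        exp_continuous.comp (continuous_id.smul continuous_const)
      exact (h1.mul continuous_const).mul h1.star
    have hrange : ∀ t, g t ∈ Sm := by
      intro t
      have := hconj ⟨exp (t • B), aux_exp_unitary d B hB t⟩
      simpa [hf, hg] using this
    have hval : g t = g 0 := aux_const d Sm hSmfin g hgc hrange t
    have hg0 : g 0 = (s : Matrix (Fin d) (Fin d) ℂ) := by
      simp [hg, zero_smul, exp_zero]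
    have hct : g t = (s : Matrix (Fin d) (Fin d) ℂ) := hval.trans hg0
    -- multiply on the right by exp (t • B)
    have hunit : star (exp (t • B)) * exp (t • B) = 1 :=
      (aux_exp_unitary d B hB t).1
    calc exp (t • B) * (s : Matrix (Fin d) (Fin d) ℂ)
        = exp (t • B) * (s : Matrix (Fin d) (Fin d) ℂ) *
            (star (exp (t • B)) * exp (t • B)) := by rw [hunit, mul_one]
      _ = g t * exp (t • B) := by rw [hg]; simp only [mul_assoc]
      _ = (s : Matrix (Fin d) (Fin d) ℂ) * exp (t • B) := by rw [hct]
  -- hence s commutes with every matrix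
  have hall : ∀ M : Matrix (Fin d) (Fin d) ℂ,
      M * (s : Matrix (Fin d) (Fin d) ℂ) = (s : Matrix (Fin d) (Fin d) ℂ) * M := by
    intro M
    have h1 : (M - Mᴴ)ᴴ = -(M - Mᴴ) := by
      rw [Matrix.conjTranspose_sub, Matrix.conjTranspose_conjTranspose]; abel
    have h2 : ((Complex.I : ℂ) • (M + Mᴴ))ᴴ = -((Complex.I : ℂ) • (M + Mᴴ)) := by
      rw [Matrix.conjTranspose_smul, Matrix.conjTranspose_add,
        Matrix.conjTranspose_conjTranspose]
      rw [Complex.star_def, Complex.conj_I, neg_smul, add_comm]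
    have c1 := hskew _ h1
    have c2 := hskew _ h2
    have c2' : (M + Mᴴ) * (s : Matrix (Fin d) (Fin d) ℂ) =
        (s : Matrix (Fin d) (Fin d) ℂ) * (M + Mᴴ) := by
      have hI : (Complex.I : ℂ) ≠ 0 := Complex.I_ne_zero
      have := c2
      rw [Matrix.smul_mul, Matrix.mul_smul] at this
      exact smul_right_injective _ hI this
    have hsum := congrArg₂ (· + ·) c1 c2'
    simp only [Matrix.sub_mul, Matrix.add_mul, Matrix.mul_sub, Matrix.mul_add] at hsum
    have h2M : (2 : ℂ) • M * (s : Matrix (Fin d) (Fin d) ℂ) =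
        (s : Matrix (Fin d) (Fin d) ℂ) * ((2 : ℂ) • M) := by
      rw [two_smul]
      rw [Matrix.add_mul, Matrix.mul_add]
      linear_combination (norm := abel) hsum
    rw [Matrix.smul_mul, Matrix.mul_smul] at h2M
    exact smul_right_injective _ (two_ne_zero) h2M
  -- commuting with everything means scalar
  obtain ⟨c, hc⟩ := Matrix.mem_range_scalar_of_commute_single
    (M := (s : Matrix (Fin d) (Fin d) ℂ)) (fun i j _ => hall _)
  apply hs c
  rw [← hc]
  ext i j
  simp [Matrix.scalar_apply, Matrix.smul_apply, Matrix.one_apply, Matrix.diagonal_apply]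
end

section
/- If a subgroup G of U(d) (d ≥ 2) normalises a finite subgroup P of U(d) that contains a non-scalar element, then the closure of G in U(d) is a proper subgroup of U(d). -/
open Matrix Complex

namespace Stmt1Aux

variable {d : ℕ}

/-- The swap "permutation matrix". -/
noncomputable def swapMat (i j : Fin d) : Matrix (Fin d) (Fin d) ℂ :=
  Matrix.of fun a b => if a = Equiv.swap i j b then 1 else 0

lemma swapMat_mul_left (i j : Fin d) (A : Matrix (Fin d) (Fin d) ℂ) (a b : Fin d) :
    (swapMat i j * A) a b = A (Equiv.swap i j a) b := by
  rw [Matrix.mul_apply]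
  rw [Finset.sum_eq_single (Equiv.swap i j a)]
  · simp [swapMat]
  · intro k _ hk
    have : a ≠ Equiv.swap i j k := by
      intro h; apply hk; rw [h, Equiv.swap_apply_self]
    simp [swapMat, this]
  · simp

lemma mul_swapMat_right (i j : Fin d) (A : Matrix (Fin d) (Fin d) ℂ) (a b : Fin d) :
    (A * swapMat i j) a b = A a (Equiv.swap i j b) := by
  rw [Matrix.mul_apply]
  rw [Finset.sum_eq_single (Equiv.swap i j b)]
  · simp [swapMat]
  · intro k _ hk
    have : k ≠ Equiv.swap i j b := hk
    simp [swapMat, this]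
  · simp

lemma swapMat_sq (i j : Fin d) : swapMat i j * swapMat i j = 1 := by
  ext a b
  rw [swapMat_mul_left]
  simp [swapMat, Matrix.one_apply, Equiv.swap_apply_self, eq_comm]

lemma star_swapMat (i j : Fin d) : star (swapMat i j) = swapMat i j := by
  rw [Matrix.star_eq_conjTranspose]
  ext a b
  simp only [Matrix.conjTranspose_apply, swapMat, Matrix.of_apply]
  have : (b = Equiv.swap i j a) ↔ (a = Equiv.swap i j b) := by
    constructor <;> intro h <;> rw [h, Equiv.swap_apply_self]
  split_ifs with h1 h2 h2
  · simp
  · exact absurd (this.mp h1) h2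
  · exact absurd (this.mpr h2) h1
  · simp

end Stmt1Aux

open Stmt1Aux

/-- If a subgroup `G` of `U(d)` (`d ≥ 2`) normalises a finite subgroup `P` containing a
non-scalar element, then the closure of `G` is a proper subset of `U(d)`. -/
theorem stmt_1 (d : ℕ) (hd : 2 ≤ d)
    (G P : Subgroup (Matrix.unitaryGroup (Fin d) ℂ))
    (hPfin : (P : Set (Matrix.unitaryGroup (Fin d) ℂ)).Finite)
    (hns : ∃ p ∈ P, ∀ c : ℂ, (p : Matrix (Fin d) (Fin d) ℂ) ≠ c • (1 : Matrix (Fin d) (Fin d) ℂ))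
    (hnorm : ∀ g ∈ G, ∀ p, p ∈ P ↔ g * p * g⁻¹ ∈ P) :
    closure (G : Set (Matrix.unitaryGroup (Fin d) ℂ)) ≠ Set.univ := by
  intro hcl
  obtain ⟨p, hpP, hp⟩ := hns
  set M := Matrix (Fin d) (Fin d) ℂ
  set q : M := (p : M) with hq
  set T : Set M := Subtype.val '' (P : Set (Matrix.unitaryGroup (Fin d) ℂ)) with hTdef
  have hTfin : T.Finite := hPfin.image _
  -- Step 1: every unitary conjugate of q lies in T.
  have key : ∀ u : Matrix.unitaryGroup (Fin d) ℂ, (u : M) * q * star (u : M) ∈ T := by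
    have hGsub : (G : Set (Matrix.unitaryGroup (Fin d) ℂ)) ⊆
        {u | (u : M) * q * star (u : M) ∈ T} := by
      intro g hg
      have hmem : g * p * g⁻¹ ∈ P := (hnorm g hg p).mp hpP
      refine ⟨g * p * g⁻¹, hmem, ?_⟩
      push_cast
      rw [← Unitary.star_eq_inv, Unitary.coe_star]
    have hcont : Continuous fun u : Matrix.unitaryGroup (Fin d) ℂ =>
        (u : M) * q * star (u : M) := by
      exact (continuous_subtype_val.matrix_mul continuous_const).matrix_mul
        continuous_subtype_val.matrix_conjTranspose
    have hclosed : IsClosed {u : Matrix.unitaryGroup (Fin d) ℂ |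
        (u : M) * q * star (u : M) ∈ T} := hTfin.isClosed.preimage hcont
    intro u
    have hu : u ∈ closure (G : Set (Matrix.unitaryGroup (Fin d) ℂ)) := by
      rw [hcl]; trivial
    exact closure_minimal hGsub hclosed hu
  -- Step 2: for any continuous unitary path through 1, conjugation fixes q.
  haveI : Finite T := hTfin.to_subtype
  have const : ∀ f : ℝ → M, Continuous f →
      (∀ t, f t ∈ Matrix.unitaryGroup (Fin d) ℂ) → f 0 = 1 →
      ∀ t, f t * q * star (f t) = q := by
    intro f hf hfu hf0 t
    have hc : Continuous fun s : ℝ => f s * q * star (f s) :=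
      (hf.matrix_mul continuous_const).matrix_mul hf.matrix_conjTranspose
    have hmaps : Set.MapsTo (fun s : ℝ => f s * q * star (f s)) Set.univ T :=
      fun s _ => key ⟨f s, hfu s⟩
    have := IsPreconnected.constant_of_mapsTo (isPreconnected_univ (α := ℝ))
      (isDiscrete_iff_discreteTopology.mpr inferInstance) hc.continuousOn hmaps (Set.mem_univ t) (Set.mem_univ 0)
    simpa [hf0, M] using this
  -- Helper: from conjugation fixing q, get commutation.
  have comm_of : ∀ A : M, A ∈ Matrix.unitaryGroup (Fin d) ℂ →
      A * q * star A = q → A * q = q * A := by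
    intro A hA h
    have h2 : A * q * star A * A = q * A := by rw [h]
    rwa [mul_assoc, (Matrix.mem_unitaryGroup_iff').mp hA, mul_one] at h2
  -- Step 3: off-diagonal entries of q vanish.
  have hoff : ∀ a b : Fin d, a ≠ b → q a b = 0 := by
    intro a b hab
    set v : ℝ → Fin d → ℂ := fun t m => if m = a then Complex.exp (t * Complex.I) else 1 with hv
    have hfu : ∀ t, Matrix.diagonal (v t) ∈ Matrix.unitaryGroup (Fin d) ℂ := by
      intro t
      rw [Matrix.mem_unitaryGroup_iff, Matrix.star_eq_conjTranspose,
        Matrix.diagonal_conjTranspose, Matrix.diagonal_mul_diagonal]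
      have : (fun i => v t i * star (v t) i) = fun _ => (1 : ℂ) := by
        funext m
        simp only [Pi.star_apply, hv]
        split_ifs with h
        · rw [RCLike.star_def, ← Complex.exp_conj]
          rw [_root_.map_mul, Complex.conj_ofReal, Complex.conj_I, ← Complex.exp_add]
          simp
        · simp
      rw [this, Matrix.diagonal_one]
    have hcont : Continuous fun t : ℝ => Matrix.diagonal (v t) := by
      apply Continuous.matrix_diagonal
      apply continuous_pi
      intro m
      simp only [hv]
      split_ifs
      · exact Complex.continuous_exp.comp ((Complex.continuous_ofReal.comp continuous_id').mul
          continuous_const)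
      · exact continuous_const
    have hf0 : Matrix.diagonal (v 0) = 1 := by
      have : v 0 = fun _ => (1 : ℂ) := by
        funext m; simp [hv]
      rw [this, Matrix.diagonal_one]
    have hcomm := comm_of _ (hfu Real.pi) (const _ hcont hfu hf0 Real.pi)
    have hval : v Real.pi a = -1 := by simp [hv, Complex.exp_pi_mul_I]
    have := congrFun (congrFun hcomm a) b
    rw [Matrix.diagonal_mul, Matrix.mul_diagonal, hval] at this
    have hvb : v Real.pi b = 1 := by simp [hv, (Ne.symm hab)]
    rw [hvb, mul_one] at this
    linear_combination (-(1:ℂ)/2) * this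
  -- Step 4: diagonal entries are all equal.
  have z0 : Fin d := ⟨0, by omega⟩
  have hdiag : ∀ i : Fin d, q i i = q z0 z0 := by
    intro i
    set X : M := swapMat i z0 with hX
    have hXs := star_swapMat i z0
    have hX2 := swapMat_sq i z0
    set f : ℝ → M := fun t => (Real.cos t : ℂ) • (1 : M) + ((Real.sin t : ℂ) * Complex.I) • X
      with hf
    have hfu : ∀ t, f t ∈ Matrix.unitaryGroup (Fin d) ℂ := by
      intro t
      set c : ℂ := (Real.cos t : ℂ) with hc
      set s : ℂ := (Real.sin t : ℂ) * Complex.I with hs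
      have hcs : c * c - s * s = 1 := by
        have hC : ((Real.cos t : ℂ)) ^ 2 + ((Real.sin t : ℂ)) ^ 2 = 1 := by
          push_cast
          linear_combination Complex.sin_sq_add_cos_sq (t : ℂ)
        rw [hc, hs]
        linear_combination hC - ((Real.sin t : ℂ)) ^ 2 * Complex.I_sq
      rw [Matrix.mem_unitaryGroup_iff]
      have hstar : star (f t) = c • (1 : M) + (-s) • X := by
        rw [hf, hX]
        simp only [M, star_add, star_smul, star_one, hXs, RCLike.star_def, _root_.map_mul,
          Complex.conj_ofReal, Complex.conj_I, hc, hs]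
        ring_nf
      rw [hstar]
      have expand : (c • (1 : M) + s • X) * (c • (1 : M) + (-s) • X)
          = (c * c - s * s) • (1 : M) + (c * (-s) + s * c) • X := by
        simp only [M, add_mul, mul_add, smul_mul_assoc, mul_smul_comm, smul_smul, hX ▸ hX2,
          one_mul, mul_one, sub_smul, add_smul, neg_smul, mul_neg]
        module
      rw [hf]
      simp only [← hc, ← hs]
      rw [expand, hcs]
      have : c * (-s) + s * c = 0 := by ring
      rw [this, zero_smul, add_zero, one_smul]
    have hcont : Continuous f := by
      rw [hf]
      exact ((Complex.continuous_ofReal.comp Real.continuous_cos).smul continuous_const).add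
        (((Complex.continuous_ofReal.comp Real.continuous_sin).mul continuous_const).smul
          continuous_const)
    have hf0 : f 0 = 1 := by
      simp [hf]
    have hcomm := comm_of _ (hfu (Real.pi / 2)) (const f hcont hfu hf0 (Real.pi / 2))
    have hfval : f (Real.pi / 2) = Complex.I • X := by
      simp [hf, Real.cos_pi_div_two, Real.sin_pi_div_two]
    rw [hfval, smul_mul_assoc, mul_smul_comm] at hcomm
    have hXq : X * q = q * X := smul_right_injective M Complex.I_ne_zero hcomm
    have := congrFun (congrFun hXq i) z0
    rw [hX] at this
    rw [swapMat_mul_left, mul_swapMat_right, Equiv.swap_apply_left, Equiv.swap_apply_right]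
      at this
    exact this.symm
  apply hp (q z0 z0)
  ext a b
  by_cases hab : a = b
  · subst hab
    rw [hdiag a]
    simp [Matrix.one_apply, Matrix.smul_apply]
  · rw [hoff a b hab]
    simp [Matrix.one_apply_ne hab]
end

section
/- For any unitary U on ℂ² and qubits x, y: the circuit consisting of (1) preparing the second qubit in state |+⟩ = (|0⟩+|1⟩)/√2, (2) applying CZ between the two qubits, (3) measuring the first qubit in the X basis, and (4) applying X to the second qubit conditioned on outcome −1, maps an arbitrary input state |ψ⟩ on the first qubit to H|ψ⟩ on the second qubit (up to global phase), for both measurement outcomes. -/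
open Matrix

namespace Stmt10

/-- The Hadamard gate. -/
noncomputable def Hg : Matrix (Fin 2) (Fin 2) ℂ :=
  (((Real.sqrt 2)⁻¹ : ℝ) : ℂ) • !![1, 1; 1, -1]

/-- Pauli `X`. -/
def Xg : Matrix (Fin 2) (Fin 2) ℂ := !![0, 1; 1, 0]

/-- Two-qubit controlled-`Z`. -/
def CZ : Matrix (Fin 2 × Fin 2) (Fin 2 × Fin 2) ℂ :=
  Matrix.diagonal fun p => if p.1 = 1 ∧ p.2 = 1 then -1 else 1

/-- The state `|+⟩`. -/
noncomputable def plus : Fin 2 → ℂ := fun _ => (((Real.sqrt 2)⁻¹ : ℝ) : ℂ)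

/-- The state `|−⟩`. -/
noncomputable def minus : Fin 2 → ℂ :=
  fun a => if a = 0 then (((Real.sqrt 2)⁻¹ : ℝ) : ℂ) else -(((Real.sqrt 2)⁻¹ : ℝ) : ℂ)

/-- The state-injection gadget: prepare qubit 2 in `|+⟩`, apply `CZ`, measure qubit 1 in
the `X` basis, and apply `X` to qubit 2 on outcome `−1`.  For either outcome the
resulting state of qubit 2 is `H|ψ⟩`, up to a nonzero scalar. -/
theorem stmt_10 (ψ : Fin 2 → ℂ) :
    let st : Fin 2 × Fin 2 → ℂ := CZ.mulVec fun p => ψ p.1 * plus p.2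
    (∃ c : ℂ, c ≠ 0 ∧
      (fun b => ∑ a, (starRingEnd ℂ) (plus a) * st (a, b)) = c • Hg.mulVec ψ) ∧
    (∃ c : ℂ, c ≠ 0 ∧
      Xg.mulVec (fun b => ∑ a, (starRingEnd ℂ) (minus a) * st (a, b)) = c • Hg.mulVec ψ) := by
  have h2 : ((Real.sqrt 2 : ℝ) : ℂ) ≠ 0 := by
    exact_mod_cast Real.sqrt_ne_zero'.mpr (by norm_num)
  have hinv : (((Real.sqrt 2)⁻¹ : ℝ) : ℂ) ≠ 0 := by
    push_cast; exact inv_ne_zero h2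
  intro st
  have hst : ∀ p, st p = (if p.1 = 1 ∧ p.2 = 1 then -1 else 1) * (ψ p.1 * plus p.2) := by
    intro p
    simp [st, CZ, Matrix.mulVec_diagonal]
  constructor
  · refine ⟨(((Real.sqrt 2)⁻¹ : ℝ) : ℂ), hinv, ?_⟩
    funext b
    fin_cases b <;>
      simp [hst, Fin.sum_univ_two, plus, Hg, Matrix.mulVec, dotProduct,
        Fin.sum_univ_two, Complex.conj_ofReal] <;> ring
  · refine ⟨(((Real.sqrt 2)⁻¹ : ℝ) : ℂ), hinv, ?_⟩
    funext b
    fin_cases b <;>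
      simp [hst, Fin.sum_univ_two, plus, minus, Hg, Xg, Matrix.mulVec, dotProduct,
        Fin.sum_univ_two, Complex.conj_ofReal] <;> ring


end Stmt10
end
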